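/- arXiv:0710.5877 — 3 statements merged into one kernel-verified Lean document; each statement's English description precedes it below -/
import Mathlib

section
/- In the rational double affine Hecke–Clifford algebra H^c_{A_{n−1}}(u), for every integer l ≥ 0 and all i ≠ j: [y_i, x_j^l] = u·( Σ_{a=0}^{l−1} x_j^a x_i^{l−1−a} + (Σ_{a=0}^{l−1} (−1)^{l−1−a} x_j^a x_i^{l−1−a})·c_i c_j )·s_{ij}, and [y_i, x_i^l] = −u·Σ_{k≠i} ( Σ_{a=0}^{l−1} x_i^a x_k^{l−1−a} + (Σ_{a=0}^{l−1} (−1)^{l−1−a} x_i^a x_k^{l−1−a})·c_k c_i )·s_{ki}. -/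
noncomputable section

abbrev SignFn (n : ℕ) := Fin n → ℤˣ

/-- The permutation action on sign functions. -/
def permAut (n : ℕ) : Equiv.Perm (Fin n) →* MulAut (SignFn n) where
  toFun σ :=
    { toFun := fun f => f ∘ σ.symm
      invFun := fun f => f ∘ σ
      left_inv := fun f => by ext k; simp
      right_inv := fun f => by ext k; simp
      map_mul' := fun f g => rfl }
  map_one' := by ext f k; simp; rfl
  map_mul' := fun σ τ => by
    ext f k
    show (f ((σ * τ).symm k) : ℤ) = f (τ.symm (σ.symm k))
    rw [Equiv.Perm.mul_def, Equiv.symm_trans_apply]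

/-- The hyperoctahedral group `W_{B_n}` of signed permutations, as a semidirect product. -/
abbrev WB (n : ℕ) := SignFn n ⋊[permAut n] Equiv.Perm (Fin n)

/-- the transposition `s_{ij}` in `W_{B_n}`. -/
def sB {n : ℕ} (i j : Fin n) : WB n := ⟨1, Equiv.swap i j⟩

/-- the transposition with sign changes `s̄_{ij}` in `W_{B_n}`. -/
def sbarB {n : ℕ} (i j : Fin n) : WB n :=
  ⟨fun k => if k = i ∨ k = j then -1 else 1, Equiv.swap i j⟩

/-- the sign change `τ_i` at `i` in `W_{B_n}`. -/
def tauB {n : ℕ} (i : Fin n) : WB n := ⟨fun k => if k = i then -1 else 1, 1⟩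

/-- The signed-permutation action of `w ∈ W_{B_n}` on a basis vector `e_i`:
`w(e_i) = (sign) • e_{(index)}`; we record the pair (sign, index). -/
def actB {n : ℕ} (w : WB n) (i : Fin n) : ℂ × Fin n :=
  (((w.left (w.right i) : ℤ) : ℂ), w.right i)

/-- `W_{D_n}` as the subgroup of even signed permutations inside `W_{B_n}`. -/
def WDsub (n : ℕ) : Subgroup (WB n) where
  carrier := {w | ∏ k, w.left k = 1}
  one_mem' := by simp
  mul_mem' := by
    intro a b ha hb
    simp only [Set.mem_setOf_eq] at *
    have h1 : (a * b).left = a.left * (permAut n a.right) b.left := rfl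
    rw [h1]
    rw [show (∏ k, (a.left * (permAut n a.right) b.left) k) = (∏ k, a.left k) * ∏ k, (permAut n a.right) b.left k from Finset.prod_mul_distrib, ha, one_mul]
    calc ∏ k, (permAut n a.right) b.left k = ∏ k, b.left (a.right.symm k) := rfl
      _ = ∏ k, b.left k := Equiv.prod_comp a.right.symm b.left
      _ = 1 := hb
  inv_mem' := by
    intro a ha
    simp only [Set.mem_setOf_eq] at *
    have h1 : (a⁻¹).left = (permAut n a.right⁻¹) a.left⁻¹ := rfl
    rw [h1]
    calc ∏ k, (permAut n a.right⁻¹) a.left⁻¹ k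
        = ∏ k, a.left⁻¹ ((a.right⁻¹).symm k) := rfl
      _ = ∏ k, (a.left k)⁻¹ := Equiv.prod_comp _ _
      _ = (∏ k, a.left k)⁻¹ := by rw [← Finset.prod_inv_distrib]
      _ = 1 := by rw [ha]; simp

lemma sB_mem {n : ℕ} (i j : Fin n) : sB i j ∈ WDsub n := by
  simp [WDsub, sB]

lemma sbarB_mem {n : ℕ} {i j : Fin n} (h : i ≠ j) : sbarB i j ∈ WDsub n := by
  show ∏ k, (if k = i ∨ k = j then (-1 : ℤˣ) else 1) = 1
  have step : ∀ k, (if k = i ∨ k = j then (-1 : ℤˣ) else 1)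
      = (if k = i then -1 else 1) * (if k = j then -1 else 1) := by
    intro k
    by_cases h1 : k = i <;> by_cases h2 : k = j <;> simp_all
  simp_rw [step, Finset.prod_mul_distrib, Finset.prod_ite_eq', Finset.mem_univ, if_true]
  norm_num

/-- the transposition `s_{ij}` as an element of `W_{D_n}`. -/
def sD {n : ℕ} (i j : Fin n) : WDsub n := ⟨sB i j, sB_mem i j⟩

/-- the transposition with sign changes `s̄_{ij}` as an element of `W_{D_n}` (junk value `1`
when `i = j`). -/
def sbarD {n : ℕ} (i j : Fin n) : WDsub n :=
  if h : i = j then 1 else ⟨sbarB i j, sbarB_mem h⟩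

/-- The signed-permutation action for `W_{D_n}`. -/
def actD {n : ℕ} (w : WDsub n) (i : Fin n) : ℂ × Fin n := actB w.1 i

/-- The (trivially signed) permutation action of `S_n`. -/
def actA (n : ℕ) (σ : Equiv.Perm (Fin n)) (i : Fin n) : ℂ × Fin n := (1, σ i)

/-- Generators of a rational double affine Hecke-Clifford algebra:
`x_i`, `y_i`, Clifford generators `c_i`, and group elements `w ∈ W`. -/
inductive HGen (n : ℕ) (G : Type) : Type
  | x : Fin n → HGen n G
  | y : Fin n → HGen n G
  | c : Fin n → HGen n G
  | g : G → HGen n G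

/-- The free algebra on the generators. -/
abbrev HF (n : ℕ) (G : Type) := FreeAlgebra ℂ (HGen n G)

def hX {n : ℕ} {G : Type} (i : Fin n) : HF n G := FreeAlgebra.ι ℂ (HGen.x i)
def hY {n : ℕ} {G : Type} (i : Fin n) : HF n G := FreeAlgebra.ι ℂ (HGen.y i)
def hC {n : ℕ} {G : Type} (i : Fin n) : HF n G := FreeAlgebra.ι ℂ (HGen.c i)
def hG {n : ℕ} {G : Type} (w : G) : HF n G := FreeAlgebra.ι ℂ (HGen.g w)

/-- The defining relations of a rational double affine Hecke-Clifford algebra, where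
`act w i = (sign, index)` records the (signed) permutation action `w(e_i) = sign • e_index`
of the group `W` on the basis vectors, and `R j i` is the prescribed value of the
commutator `[y_j, x_i]`. -/
inductive HRel (n : ℕ) (G : Type) [Group G] (act : G → Fin n → ℂ × Fin n)
    (R : Fin n → Fin n → HF n G) : HF n G → HF n G → Prop
  | cc (i : Fin n) : HRel n G act R (hC i * hC i) 1
  | canti {i j : Fin n} (h : i ≠ j) : HRel n G act R (hC i * hC j) (-(hC j * hC i))
  | xx (i j : Fin n) : HRel n G act R (hX i * hX j) (hX j * hX i)
  | yy (i j : Fin n) : HRel n G act R (hY i * hY j) (hY j * hY i)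
  | yc (i j : Fin n) : HRel n G act R (hY i * hC j) (hC j * hY i)
  | xcs (i : Fin n) : HRel n G act R (hX i * hC i) (-(hC i * hX i))
  | xc {i j : Fin n} (h : i ≠ j) : HRel n G act R (hX i * hC j) (hC j * hX i)
  | gone : HRel n G act R (hG (1 : G)) 1
  | gmul (w w' : G) : HRel n G act R (hG w * hG w') (hG (w * w'))
  | gx (w : G) (i : Fin n) :
      HRel n G act R (hG w * hX i) ((act w i).1 • (hX (act w i).2 * hG w))
  | gy (w : G) (i : Fin n) :
      HRel n G act R (hG w * hY i) ((act w i).1 • (hY (act w i).2 * hG w))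
  | gc (w : G) (i : Fin n) :
      HRel n G act R (hG w * hC i) ((act w i).1 • (hC (act w i).2 * hG w))
  | yx (j i : Fin n) : HRel n G act R (hY j * hX i) (hX i * hY j + R j i)

/-- A rational double affine Hecke-Clifford algebra, presented by generators and relations. -/
abbrev DaHCa (n : ℕ) (G : Type) [Group G] (act : G → Fin n → ℂ × Fin n)
    (R : Fin n → Fin n → HF n G) := RingQuot (HRel n G act R)

variable {n : ℕ} {G : Type} [Group G] {act : G → Fin n → ℂ × Fin n}
  {R : Fin n → Fin n → HF n G}

def dX (act : G → Fin n → ℂ × Fin n) (R : Fin n → Fin n → HF n G) (i : Fin n) :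
    DaHCa n G act R := RingQuot.mkAlgHom ℂ (HRel n G act R) (hX i)
def dY (act : G → Fin n → ℂ × Fin n) (R : Fin n → Fin n → HF n G) (i : Fin n) :
    DaHCa n G act R := RingQuot.mkAlgHom ℂ (HRel n G act R) (hY i)
def dC (act : G → Fin n → ℂ × Fin n) (R : Fin n → Fin n → HF n G) (i : Fin n) :
    DaHCa n G act R := RingQuot.mkAlgHom ℂ (HRel n G act R) (hC i)
def dG (act : G → Fin n → ℂ × Fin n) (R : Fin n → Fin n → HF n G) (w : G) :
    DaHCa n G act R := RingQuot.mkAlgHom ℂ (HRel n G act R) (hG w)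

/-- The right-hand side of the commutation relations `[y_j, x_i]` in the rational
DaHCa of type `A_{n-1}`:  `[y_j,x_i] = u(1+c_j c_i)s_{ji}` for `i ≠ j` and
`[y_i,x_i] = -u Σ_{k≠i} (1+c_k c_i)s_{ki}`. -/
def RA (n : ℕ) (u : ℂ) (j i : Fin n) : HF n (Equiv.Perm (Fin n)) :=
  if j = i then
    -(u • ∑ k ∈ Finset.univ.erase i, (1 + hC k * hC i) * hG (Equiv.swap k i))
  else
    u • ((1 + hC j * hC i) * hG (Equiv.swap j i))

/-- The rational double affine Hecke-Clifford algebra of type `A_{n-1}`. -/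
abbrev HCA (n : ℕ) (u : ℂ) := DaHCa n (Equiv.Perm (Fin n)) (actA n) (RA n u)

def xA {n : ℕ} {u : ℂ} (i : Fin n) : HCA n u := dX (actA n) (RA n u) i
def yA {n : ℕ} {u : ℂ} (i : Fin n) : HCA n u := dY (actA n) (RA n u) i
def cA {n : ℕ} {u : ℂ} (i : Fin n) : HCA n u := dC (actA n) (RA n u) i
def gA {n : ℕ} {u : ℂ} (w : Equiv.Perm (Fin n)) : HCA n u := dG (actA n) (RA n u) w

section AuxProof

variable {n : ℕ} {u : ℂ}

/-- The quotient map onto `HCA n u`. -/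
def piA (n : ℕ) (u : ℂ) : HF n (Equiv.Perm (Fin n)) →ₐ[ℂ] HCA n u :=
  RingQuot.mkAlgHom ℂ (HRel n (Equiv.Perm (Fin n)) (actA n) (RA n u))

lemma q_rel {a b : HF n (Equiv.Perm (Fin n))}
    (h : HRel n (Equiv.Perm (Fin n)) (actA n) (RA n u) a b) : piA n u a = piA n u b :=
  RingQuot.mkAlgHom_rel ℂ h

lemma xA_eq (i : Fin n) : (xA i : HCA n u) = piA n u (hX i) := rfl
lemma yA_eq (i : Fin n) : (yA i : HCA n u) = piA n u (hY i) := rfl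
lemma cA_eq (i : Fin n) : (cA i : HCA n u) = piA n u (hC i) := rfl
lemma gA_eq (w : Equiv.Perm (Fin n)) : (gA w : HCA n u) = piA n u (hG w) := rfl

lemma q_yx (a b : Fin n) :
    (yA a : HCA n u) * xA b = xA b * yA a + piA n u (RA n u a b) := by
  have h := q_rel (u := u) (HRel.yx (act := actA n) (R := RA n u) a b)
  simp only [map_mul, map_add] at h
  simpa [yA_eq, xA_eq] using h

lemma q_gx (w : Equiv.Perm (Fin n)) (i : Fin n) :
    (gA w : HCA n u) * xA i = xA (w i) * gA w := by
  have h := q_rel (u := u) (HRel.gx (act := actA n) (R := RA n u) w i)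
  simp only [actA, map_mul, map_smul, one_smul] at h
  simpa [gA_eq, xA_eq] using h

lemma q_xc_same (i : Fin n) : (xA i : HCA n u) * cA i = -(cA i * xA i) := by
  have h := q_rel (u := u) (HRel.xcs (act := actA n) (R := RA n u) i)
  simp only [map_mul, map_neg] at h
  simpa [xA_eq, cA_eq] using h

lemma q_xc {i j : Fin n} (h : i ≠ j) : (xA i : HCA n u) * cA j = cA j * xA i := by
  have h' := q_rel (u := u) (HRel.xc (act := actA n) (R := RA n u) h)
  simp only [map_mul] at h'
  simpa [xA_eq, cA_eq] using h'

lemma hca_neg_mul (a b : HCA n u) : -a * b = -(a * b) := neg_mul a b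
lemma hca_mul_neg (a b : HCA n u) : a * -b = -(a * b) := mul_neg a b
lemma hca_neg_add (a b : HCA n u) : -(a + b) = -a + -b := neg_add a b

lemma q_ccx {p q : Fin n} (h : p ≠ q) :
    ((cA p : HCA n u) * cA q) * xA p = -(xA p * (cA p * cA q)) := by
  have h1 : (cA q : HCA n u) * xA p = xA p * cA q := (q_xc h).symm
  have h2 : (cA p : HCA n u) * xA p = -(xA p * cA p) := by
    rw [q_xc_same p, neg_neg]
  calc (cA p * cA q) * xA p = cA p * (cA q * xA p) := by rw [mul_assoc]
    _ = (cA p * xA p) * cA q := by rw [h1, mul_assoc]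
    _ = -(xA p * cA p) * cA q := by rw [h2]
    _ = -(xA p * (cA p * cA q)) := by rw [hca_neg_mul, mul_assoc]

/-- Abstract commutator-with-power induction. -/
lemma comm_pow {A : Type*} [Ring A] (Y X : A) (D : ℕ → A) (h0 : D 0 = 0)
    (h1 : Y * X - X * Y = D 1)
    (hstep : ∀ l, D (l + 1) = D l * X + X ^ l * D 1) :
    ∀ l, Y * X ^ l - X ^ l * Y = D l := by
  intro l
  induction l with
  | zero => simp [h0]
  | succ l ih =>
    rw [hstep, ← ih, ← h1, pow_succ]
    noncomm_ring

lemma sumA_succ {A : Type*} [Ring A] (X Z : A) (l : ℕ) :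
    (∑ a ∈ Finset.range (l + 1), X ^ a * Z ^ (l - a))
      = (∑ a ∈ Finset.range l, X ^ a * Z ^ (l - 1 - a)) * Z + X ^ l := by
  rw [Finset.sum_range_succ, Finset.sum_mul]
  congr 1
  · refine Finset.sum_congr rfl fun a ha => ?_
    have hal : a < l := Finset.mem_range.mp ha
    have : l - a = (l - 1 - a) + 1 := by omega
    rw [this, pow_succ, mul_assoc]
  · simp

lemma sumB_succ {A : Type*} [Ring A] [Module ℂ A] [SMulCommClass ℂ A A]
    [IsScalarTower ℂ A A] (X Z : A) (l : ℕ) :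
    (∑ a ∈ Finset.range (l + 1), ((-1 : ℂ)) ^ (l - a) • (X ^ a * Z ^ (l - a)))
      = -((∑ a ∈ Finset.range l, ((-1 : ℂ)) ^ (l - 1 - a) • (X ^ a * Z ^ (l - 1 - a))) * Z)
        + X ^ l := by
  rw [Finset.sum_range_succ, Finset.sum_mul, ← Finset.sum_neg_distrib]
  congr 1
  · refine Finset.sum_congr rfl fun a ha => ?_
    have hal : a < l := Finset.mem_range.mp ha
    have h1 : l - a = (l - 1 - a) + 1 := by omega
    rw [h1, pow_succ, pow_succ, smul_mul_assoc, mul_assoc]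
    rw [mul_neg_one, neg_smul]
  · simp

/-- The core ring identity for the inductive step. -/
lemma step_core {A : Type*} [Ring A] (SA SB X Z cc g : A) (m : ℕ)
    (hgx : g * X = Z * g) (hccx : cc * Z = -(Z * cc)) :
    ((SA * Z + X ^ m) + (-(SB * Z) + X ^ m) * cc) * g
      = ((SA + SB * cc) * g) * X + X ^ m * ((1 + cc) * g) := by
  rw [mul_assoc _ g X, hgx, ← mul_assoc]
  have e1 : (SA + SB * cc) * Z = SA * Z + -(SB * Z) * cc := by
    rw [add_mul, mul_assoc, hccx]; noncomm_ring
  rw [e1]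
  noncomm_ring

end AuxProof

/-- **Commutators with powers of `x`** (Khongsap-Wang, Lemma 3.1).  In the rational
double affine Hecke-Clifford algebra `H^c_{A_{n-1}}(u)`, for `l ≥ 0` and `i ≠ j`,
`[y_i, x_j^l] = u((x_j^l-x_i^l)/(x_j-x_i) + ((x_j^l-(-x_i)^l)/(x_j+x_i)) c_i c_j) s_{ij}`
and similarly for `[y_i, x_i^l]`, where the divided differences are written out as the
polynomial sums `Σ_{a=0}^{l-1} x_j^a x_i^{l-1-a}` and `Σ_{a=0}^{l-1} (-1)^{l-1-a} x_j^a x_i^{l-1-a}`. -/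
theorem daHCaA_comm_y_xpow (n : ℕ) (u : ℂ) (l : ℕ) (i j : Fin n) (hij : i ≠ j) :
    ((yA i : HCA n u) * xA j ^ l - xA j ^ l * yA i
      = u • (((∑ a ∈ Finset.range l, xA j ^ a * xA i ^ (l - 1 - a))
          + (∑ a ∈ Finset.range l, ((-1 : ℂ)) ^ (l - 1 - a) • (xA j ^ a * xA i ^ (l - 1 - a)))
            * (cA i * cA j)) * gA (Equiv.swap i j))) ∧
    ((yA i : HCA n u) * xA i ^ l - xA i ^ l * yA i
      = -(u • ∑ k ∈ Finset.univ.erase i,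
          (((∑ a ∈ Finset.range l, xA i ^ a * xA k ^ (l - 1 - a))
            + (∑ a ∈ Finset.range l, ((-1 : ℂ)) ^ (l - 1 - a) • (xA i ^ a * xA k ^ (l - 1 - a)))
              * (cA k * cA i)) * gA (Equiv.swap k i)))) := by
  constructor
  · -- first statement: [y_i, x_j^l]
    have hgx : (gA (Equiv.swap i j) : HCA n u) * xA j = xA i * gA (Equiv.swap i j) := by
      have h := q_gx (u := u) (Equiv.swap i j) j
      rwa [Equiv.swap_apply_right] at h
    have hccx := q_ccx (u := u) hij
    refine comm_pow (yA i) (xA j)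
      (fun m => u • (((∑ a ∈ Finset.range m, xA j ^ a * xA i ^ (m - 1 - a))
          + (∑ a ∈ Finset.range m, ((-1 : ℂ)) ^ (m - 1 - a) • (xA j ^ a * xA i ^ (m - 1 - a)))
            * (cA i * cA j)) * gA (Equiv.swap i j))) (by simp) ?_ ?_ l
    · -- base case l = 1
      rw [q_yx i j]
      rw [show RA n u i j = u • ((1 + hC i * hC j) * hG (Equiv.swap i j)) from if_neg hij]
      rw [add_sub_cancel_left]
      simp [Finset.sum_range_one, map_smul, ← cA_eq, ← gA_eq]
    · -- inductive step
      intro m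
      beta_reduce
      simp only [Nat.add_sub_cancel, Finset.sum_range_one, Nat.sub_self, Nat.sub_zero,
        pow_zero, one_smul, mul_one, one_mul]
      rw [sumA_succ (xA j) (xA i) m, sumB_succ (xA j) (xA i) m]
      rw [smul_mul_assoc, mul_smul_comm, ← smul_add]
      congr 1
      exact step_core _ _ (xA j) (xA i) (cA i * cA j) (gA (Equiv.swap i j)) m hgx hccx
  · -- second statement: [y_i, x_i^l]
    refine comm_pow (yA i) (xA i)
      (fun m => -(u • ∑ k ∈ Finset.univ.erase i,
          (((∑ a ∈ Finset.range m, xA i ^ a * xA k ^ (m - 1 - a))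
            + (∑ a ∈ Finset.range m, ((-1 : ℂ)) ^ (m - 1 - a) • (xA i ^ a * xA k ^ (m - 1 - a)))
              * (cA k * cA i)) * gA (Equiv.swap k i)))) (by simp) ?_ ?_ l
    · -- base case l = 1
      rw [q_yx i i]
      rw [show RA n u i i = -(u • ∑ k ∈ Finset.univ.erase i,
            (1 + hC k * hC i) * hG (Equiv.swap k i)) from if_pos rfl]
      rw [add_sub_cancel_left]
      simp [Finset.sum_range_one, map_smul, ← cA_eq, ← gA_eq]
    · -- inductive step
      intro m
      beta_reduce
      simp only [Nat.add_sub_cancel, Finset.sum_range_one, Nat.sub_self, Nat.sub_zero,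
        pow_zero, one_smul, mul_one, one_mul]
      rw [hca_neg_mul, smul_mul_assoc, Finset.sum_mul]
      rw [hca_mul_neg, mul_smul_comm, Finset.mul_sum]
      rw [← hca_neg_add, ← smul_add, ← Finset.sum_add_distrib]
      refine neg_inj.mpr (congrArg (fun z => u • z)
        (Finset.sum_congr rfl fun k hk => ?_))
      have hki : k ≠ i := Finset.ne_of_mem_erase hk
      have hgx : (gA (Equiv.swap k i) : HCA n u) * xA i = xA k * gA (Equiv.swap k i) := by
        have h := q_gx (u := u) (Equiv.swap k i) i
        rwa [Equiv.swap_apply_right] at h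
      rw [sumA_succ (xA i) (xA k) m, sumB_succ (xA i) (xA k) m]
      exact step_core _ _ (xA i) (xA k) (cA k * cA i) (gA (Equiv.swap k i)) m hgx (q_ccx hki)

end
end

section
/- In the rational double affine Hecke–Clifford algebra H^c_{B_n}(u,v), for every integer l ≥ 0 and all i ≠ j, setting P = Σ_{a=0}^{l−1} x_j^a x_i^{l−1−a} and Q = Σ_{a=0}^{l−1} (−1)^{l−1−a} x_j^a x_i^{l−1−a}: [y_i, x_j^l] = u·(P + Q·c_i c_j)·s_{ij} − u·(Q − P·c_i c_j)·s̄_{ij}; and setting, for each k ≠ i, P_k = Σ_{a=0}^{l−1} x_i^a x_k^{l−1−a} and Q_k = Σ_{a=0}^{l−1} (−1)^{l−1−a} x_i^a x_k^{l−1−a}: [y_i, x_i^l] = −u·Σ_{k≠i} ( (P_k + Q_k·c_k c_i)·s_{ki} + (Q_k − P_k·c_k c_i)·s̄_{ki} ) − √2·v·R·τ_i, where R = x_i^{l−1} if l is odd and R = 0 if l is even. -/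
noncomputable section

variable {n : ℕ} {G : Type} [Group G] {act : G → Fin n → ℂ × Fin n}
  {R : Fin n → Fin n → HF n G}

/-- The right-hand side of the commutation relations `[y_j, x_i]` in the rational
DaHCa of type `B_n`. -/
def RB (n : ℕ) (u v : ℂ) (j i : Fin n) : HF n (WB n) :=
  if j = i then
    -(u • ∑ k ∈ Finset.univ.erase i,
        ((1 + hC k * hC i) * hG (sB k i) + (1 - hC k * hC i) * hG (sbarB k i)))
      - ((Real.sqrt 2 : ℂ) * v) • hG (tauB i)
  else
    u • ((1 + hC j * hC i) * hG (sB i j) - (1 - hC j * hC i) * hG (sbarB i j))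

/-- The rational double affine Hecke-Clifford algebra of type `B_n`. -/
abbrev HCB (n : ℕ) (u v : ℂ) := DaHCa n (WB n) actB (RB n u v)

def xB {n : ℕ} {u v : ℂ} (i : Fin n) : HCB n u v := dX actB (RB n u v) i
def yB {n : ℕ} {u v : ℂ} (i : Fin n) : HCB n u v := dY actB (RB n u v) i
def cB {n : ℕ} {u v : ℂ} (i : Fin n) : HCB n u v := dC actB (RB n u v) i
def gB {n : ℕ} {u v : ℂ} (w : WB n) : HCB n u v := dG actB (RB n u v) w

namespace KW
variable {n : ℕ} {u v : ℂ}

lemma mk_eq {a b : HF n (WB n)} (h : HRel n (WB n) actB (RB n u v) a b) :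
    RingQuot.mkAlgHom ℂ (HRel n (WB n) actB (RB n u v)) a
      = RingQuot.mkAlgHom ℂ (HRel n (WB n) actB (RB n u v)) b :=
  RingQuot.mkAlgHom_rel ℂ h

lemma xB_comm (a b : Fin n) : (xB a : HCB n u v) * xB b = xB b * xB a := by
  have := mk_eq (u := u) (v := v) (HRel.xx a b)
  simpa [xB, dX, map_mul] using this

lemma cB_xB_self (a : Fin n) : (xB a : HCB n u v) * cB a = -(cB a * xB a) := by
  have := mk_eq (u := u) (v := v) (HRel.xcs a)
  simpa [xB, cB, dX, dC, map_mul, map_neg] using this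

lemma cB_xB {a b : Fin n} (h : a ≠ b) : (xB a : HCB n u v) * cB b = cB b * xB a := by
  have := mk_eq (u := u) (v := v) (HRel.xc h)
  simpa [xB, cB, dX, dC, map_mul] using this

lemma gB_xB (w : WB n) (a : Fin n) :
    (gB w : HCB n u v) * xB a = (actB w a).1 • (xB (actB w a).2 * gB w) := by
  have := mk_eq (u := u) (v := v) (HRel.gx w a)
  simpa [xB, gB, dX, dG, map_mul, map_smul] using this

lemma yB_xB (a b : Fin n) :
    (yB a : HCB n u v) * xB b
      = xB b * yB a + RingQuot.mkAlgHom ℂ (HRel n (WB n) actB (RB n u v)) (RB n u v a b) := by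
  have := mk_eq (u := u) (v := v) (HRel.yx a b)
  simpa [xB, yB, dX, dY, map_mul, map_add] using this

end KW
namespace KW2
open KW
variable {n : ℕ} {u v : ℂ}

lemma sB_symm (i j : Fin n) : sB j i = sB i j := by
  simp [sB, Equiv.swap_comm]

lemma sbarB_symm (i j : Fin n) : sbarB j i = sbarB i j := by
  have h : (fun k => if k = j ∨ k = i then (-1 : ℤˣ) else 1)
      = (fun k => if k = i ∨ k = j then (-1 : ℤˣ) else 1) := by
    funext k; exact if_congr or_comm rfl rfl
  simp only [sbarB, h, Equiv.swap_comm]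

lemma act_sB (i j : Fin n) :
    actB (sB i j) j = (1, i) ∧ actB (sB i j) i = (1, j) := by
  constructor <;> simp [actB, sB]

lemma act_sbarB {i j : Fin n} (hij : i ≠ j) :
    actB (sbarB i j) j = (-1, i) ∧ actB (sbarB i j) i = (-1, j) := by
  constructor <;> simp [actB, sbarB]

lemma act_tauB_self (i : Fin n) : actB (tauB i) i = (-1, i) := by
  simp [actB, tauB]

-- derived commutation with xB
lemma sB_x_right {i j : Fin n} (hij : i ≠ j) :
    (gB (sB i j) : HCB n u v) * xB j = xB i * gB (sB i j) := by
  rw [gB_xB, (act_sB i j).1]; simp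

lemma sbarB_x_right {i j : Fin n} (hij : i ≠ j) :
    (gB (sbarB i j) : HCB n u v) * xB j = (-1 : ℂ) • (xB i * gB (sbarB i j)) := by
  rw [gB_xB, (act_sbarB hij).1]

lemma tauB_x_self (i : Fin n) :
    (gB (tauB i) : HCB n u v) * xB i = (-1 : ℂ) • (xB i * gB (tauB i)) := by
  rw [gB_xB, act_tauB_self]

end KW2
namespace KW3
variable {A : Type} [Ring A] [Algebra ℂ A]

omit [Algebra ℂ A] in
lemma hom_pow {s x z : A} (h : s * x = z * s) (l : ℕ) : s * x ^ l = z ^ l * s := by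
  induction l with
  | zero => simp
  | succ m ih =>
    rw [pow_succ, ← mul_assoc, ih, mul_assoc, h, ← mul_assoc, ← pow_succ]

lemma shom_pow {t x z : A} {ε : ℂ} (h : t * x = ε • (z * t)) (l : ℕ) :
    t * x ^ l = ε ^ l • (z ^ l * t) := by
  induction l with
  | zero => simp
  | succ m ih =>
    rw [pow_succ, ← mul_assoc, ih, smul_mul_assoc, mul_assoc, h, mul_smul_comm,
      smul_smul, ← pow_succ, ← mul_assoc, ← pow_succ]

lemma step1 (u : ℂ) (x z C s t p q e : A)
    (hsx : s * x = z * s) (htx : t * x = (-1 : ℂ) • (z * t)) (hCz : C * z = -(z * C)) :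
    (u • ((p + q * C) * s) - u • ((q - p * C) * t)) * x
        + e * (u • ((1 + C) * s - (1 - C) * t))
      = u • (((p * z + e) + (-(q * z) + e) * C) * s)
        - u • (((-(q * z) + e) - (p * z + e) * C) * t) := by
  have h1 : ((p + q * C) * s) * x = ((p * z) + (-(q * z)) * C) * s := by
    rw [mul_assoc, hsx, ← mul_assoc, add_mul, add_mul, mul_assoc q C z, hCz]
    noncomm_ring
  have hq : (q - p * C) * z = q * z + p * z * C := by
    rw [sub_mul, mul_assoc p C z, hCz]; noncomm_ring
  have h2 : ((q - p * C) * t) * x = (-(q * z) - (p * z) * C) * t := by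
    rw [mul_assoc, htx, mul_smul_comm, ← mul_assoc, hq, neg_one_smul]
    noncomm_ring
  rw [sub_mul, smul_mul_assoc, smul_mul_assoc, h1, h2, mul_smul_comm,
    ← smul_sub, ← smul_add, ← smul_sub]
  congr 1
  noncomm_ring

lemma step2 (z zl e C s t p q : A) (ε : ℂ) (hε : ε * ε = 1)
    (hsz : s * zl = e * s) (htz : t * zl = ε • (e * t))
    (hCe : C * e = ε • (e * C)) :
    z * ((p + q * C) * s + (q - p * C) * t) + ((1 + C) * s + (1 - C) * t) * zl
      = ((e + z * p) + (ε • e + z * q) * C) * s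
        + ((ε • e + z * q) - (e + z * p) * C) * t := by
  have h1 : ((1 + C) * s) * zl = (e + ε • e * C) * s := by
    rw [mul_assoc, hsz, ← mul_assoc, add_mul, one_mul, hCe, smul_mul_assoc]
  have h2 : ((1 - C) * t) * zl = (ε • e - e * C) * t := by
    rw [mul_assoc, htz, mul_smul_comm, ← mul_assoc, sub_mul, one_mul, hCe, sub_mul,
      smul_mul_assoc, smul_sub, smul_smul, hε, one_smul, sub_mul (ε • e) (e * C) t, smul_mul_assoc ε e t]
  rw [add_mul _ _ zl, h1, h2]
  noncomm_ring

lemma nos (a : A) : (-1 : ℂ) • a = -a := neg_one_smul ℂ a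

end KW3
namespace KW4
open KW KW2 KW3
variable {n : ℕ} {u v : ℂ}

lemma cB_xB_self' (a : Fin n) : (cB a : HCB n u v) * xB a = -(xB a * cB a) := by
  rw [cB_xB_self a, neg_neg]

lemma Cx_first {a b : Fin n} (h : a ≠ b) :
    (cB a * cB b : HCB n u v) * xB a = -(xB a * (cB a * cB b)) := by
  have hnm : ∀ p q : HCB n u v, -p * q = -(p * q) := fun p q => neg_mul p q
  rw [mul_assoc, ← cB_xB h, ← mul_assoc, cB_xB_self' a, hnm, mul_assoc]

lemma Cx_second {a b : Fin n} (h : a ≠ b) :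
    (cB a * cB b : HCB n u v) * xB b = -(xB b * (cB a * cB b)) := by
  rw [mul_assoc, cB_xB_self' b, mul_neg (cB a : HCB n u v) (xB b * cB b), ← mul_assoc, ← cB_xB h.symm, mul_assoc]

lemma comm_y_x_ne {i j : Fin n} (h : i ≠ j) :
    (yB i : HCB n u v) * xB j - xB j * yB i
      = u • ((1 + cB i * cB j) * gB (sB i j) - (1 - cB i * cB j) * gB (sbarB i j)) := by
  rw [yB_xB, add_sub_cancel_left]
  have hR : RB n u v i j
      = u • ((1 + hC i * hC j) * hG (sB i j) - (1 - hC i * hC j) * hG (sbarB i j)) := by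
    simp only [RB]
    rw [if_neg h, sB_symm, sbarB_symm]
  rw [hR]
  simp only [map_smul, map_sub, map_add, map_mul, map_one]
  rfl

lemma comm_y_x_self (i : Fin n) :
    (yB i : HCB n u v) * xB i - xB i * yB i
      = -(u • ∑ k ∈ Finset.univ.erase i,
            ((1 + cB k * cB i) * gB (sB k i) + (1 - cB k * cB i) * gB (sbarB k i)))
        - ((Real.sqrt 2 : ℂ) * v) • gB (tauB i) := by
  rw [yB_xB, add_sub_cancel_left]
  have hR : RB n u v i i
      = -(u • ∑ k ∈ Finset.univ.erase i,
            ((1 + hC k * hC i) * hG (sB k i) + (1 - hC k * hC i) * hG (sbarB k i)))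
        - ((Real.sqrt 2 : ℂ) * v) • hG (tauB i) := by
    simp only [RB, eq_self_iff_true, if_true]
  rw [hR]
  simp only [map_smul, map_sub, map_add, map_mul, map_one, map_neg, map_sum]
  rfl

end KW4
namespace KW5
open KW KW2 KW3 KW4

section abstractA
variable {A : Type} [Ring A] [Algebra ℂ A]

lemma key1 (y x : A) (m : ℕ) :
    y * x ^ (m+1) - x ^ (m+1) * y
      = (y * x ^ m - x ^ m * y) * x + x ^ m * (y * x - x * y) := by
  rw [pow_succ, sub_mul, mul_sub, mul_assoc y, mul_assoc (x ^ m) y,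
    mul_assoc (x ^ m) x, sub_add_sub_cancel]

lemma key2 (y x : A) (m : ℕ) :
    y * x ^ (m+1) - x ^ (m+1) * y
      = x * (y * x ^ m - x ^ m * y) + (y * x - x * y) * x ^ m := by
  rw [pow_succ', mul_sub, sub_mul, ← mul_assoc x (x ^ m) y, mul_assoc y x,
    mul_assoc x y, sub_add_sub_cancel']

lemma Psucc (x z : A) (m : ℕ) :
    (∑ a ∈ Finset.range (m+1), x ^ a * z ^ (m + 1 - 1 - a))
      = (∑ a ∈ Finset.range m, x ^ a * z ^ (m - 1 - a)) * z + x ^ m := by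
  rw [Finset.sum_range_succ, Finset.sum_mul]
  congr 1
  · apply Finset.sum_congr rfl
    intro a ha
    have ham := Finset.mem_range.mp ha
    rw [mul_assoc, ← pow_succ]
    congr 2
    omega
  · simp

lemma Qsucc (x z : A) (m : ℕ) :
    (∑ a ∈ Finset.range (m+1), ((-1:ℂ)) ^ (m + 1 - 1 - a) • (x ^ a * z ^ (m + 1 - 1 - a)))
      = -((∑ a ∈ Finset.range m, ((-1:ℂ)) ^ (m - 1 - a) • (x ^ a * z ^ (m - 1 - a))) * z)
          + x ^ m := by
  rw [Finset.sum_range_succ, Finset.sum_mul, ← Finset.sum_neg_distrib]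
  congr 1
  · apply Finset.sum_congr rfl
    intro a ha
    have ham := Finset.mem_range.mp ha
    rw [smul_mul_assoc, mul_assoc, ← pow_succ, ← neg_smul]
    have h1 : m - 1 - a + 1 = m - a := by omega
    have h2 : m + 1 - 1 - a = m - a := by omega
    rw [h1, h2]
    congr 1
    rw [show m - a = (m - 1 - a) + 1 from by omega, pow_succ]
    ring
  · simp

lemma Psucc' (z x : A) (m : ℕ) :
    (∑ a ∈ Finset.range (m+1), z ^ a * x ^ (m + 1 - 1 - a))
      = x ^ m + z * (∑ a ∈ Finset.range m, z ^ a * x ^ (m - 1 - a)) := by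
  rw [Finset.sum_range_succ', Finset.mul_sum, add_comm]
  congr 1
  · simp
  · apply Finset.sum_congr rfl
    intro a ha
    rw [pow_succ', mul_assoc]
    congr 3
    omega

lemma Qsucc' (z x : A) (m : ℕ) :
    (∑ a ∈ Finset.range (m+1), ((-1:ℂ)) ^ (m + 1 - 1 - a) • (z ^ a * x ^ (m + 1 - 1 - a)))
      = ((-1:ℂ)) ^ m • x ^ m
          + z * (∑ a ∈ Finset.range m, ((-1:ℂ)) ^ (m - 1 - a) • (z ^ a * x ^ (m - 1 - a))) := by
  rw [Finset.sum_range_succ', Finset.mul_sum, add_comm]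
  congr 1
  · simp
  · apply Finset.sum_congr rfl
    intro a ha
    rw [mul_smul_comm, pow_succ', mul_assoc]
    have h2 : m + 1 - 1 - (a + 1) = m - 1 - a := by omega
    rw [h2]

lemma expand2 (u w : ℂ) (z zl S S' B B' : A) :
    z * (-(u • S) - w • B) + (-(u • S') - w • B') * zl
      = -(u • (z * S + S' * zl)) - w • (z * B + B' * zl) := by
  rw [mul_sub, mul_neg, mul_smul_comm, mul_smul_comm, sub_mul, neg_mul,
    smul_mul_assoc, smul_mul_assoc, smul_add, smul_add, neg_add]
  abel

end abstractA
end KW5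
namespace KW6
open KW KW2 KW3 KW4 KW5
variable {n : ℕ} {u v : ℂ}

lemma part1 {i j : Fin n} (hij : i ≠ j) (l : ℕ) :
    (yB i : HCB n u v) * xB j ^ l - xB j ^ l * yB i
      = u • (((∑ a ∈ Finset.range l, xB j ^ a * xB i ^ (l - 1 - a))
            + (∑ a ∈ Finset.range l, ((-1 : ℂ)) ^ (l - 1 - a) • (xB j ^ a * xB i ^ (l - 1 - a)))
              * (cB i * cB j)) * gB (sB i j))
        - u • (((∑ a ∈ Finset.range l, ((-1 : ℂ)) ^ (l - 1 - a) • (xB j ^ a * xB i ^ (l - 1 - a)))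
            - (∑ a ∈ Finset.range l, xB j ^ a * xB i ^ (l - 1 - a)) * (cB i * cB j))
              * gB (sbarB i j)) := by
  induction l with
  | zero => simp
  | succ m ih =>
    rw [key1, ih, comm_y_x_ne hij,
      step1 u (xB j) (xB i) (cB i * cB j) (gB (sB i j)) (gB (sbarB i j)) _ _ (xB j ^ m)
        (sB_x_right hij) (sbarB_x_right hij) (Cx_first hij),
      Psucc (xB j) (xB i) m, Qsucc (xB j) (xB i) m]

lemma tau_rec (i : Fin n) (m : ℕ) :
    (xB i : HCB n u v) * ((if Odd m then xB i ^ (m - 1) else 0) * gB (tauB i))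
        + gB (tauB i) * xB i ^ m
      = (if Odd (m + 1) then xB i ^ (m + 1 - 1) else 0) * gB (tauB i) := by
  rw [shom_pow (tauB_x_self i) m]
  rcases Nat.even_or_odd m with he | ho
  · rw [if_neg (by simp [Nat.not_odd_iff_even.mpr he]), if_pos (by simp [Nat.odd_add_one,
      Nat.not_odd_iff_even.mpr he]), Even.neg_one_pow he]
    simp
  · rw [if_pos ho, if_neg (by simp [Nat.odd_add_one, Nat.not_even_iff_odd.mpr ho]),
      Odd.neg_one_pow ho, ← mul_assoc, ← pow_succ',
      show m - 1 + 1 = m from Nat.succ_pred_eq_of_pos ho.pos]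
    rw [show ((-1 : ℂ) • ((xB i : HCB n u v) ^ m * gB (tauB i))) = -(xB i ^ m * gB (tauB i)) from nos (A := HCB n u v) _]
    simp

lemma part2 (i : Fin n) (l : ℕ) :
    (yB i : HCB n u v) * xB i ^ l - xB i ^ l * yB i
      = -(u • ∑ k ∈ Finset.univ.erase i,
            (((∑ a ∈ Finset.range l, xB i ^ a * xB k ^ (l - 1 - a))
                + (∑ a ∈ Finset.range l, ((-1 : ℂ)) ^ (l - 1 - a)
                    • (xB i ^ a * xB k ^ (l - 1 - a))) * (cB k * cB i)) * gB (sB k i)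
              + ((∑ a ∈ Finset.range l, ((-1 : ℂ)) ^ (l - 1 - a)
                    • (xB i ^ a * xB k ^ (l - 1 - a)))
                - (∑ a ∈ Finset.range l, xB i ^ a * xB k ^ (l - 1 - a)) * (cB k * cB i))
                  * gB (sbarB k i)))
        - ((Real.sqrt 2 : ℂ) * v) • ((if Odd l then xB i ^ (l - 1) else 0) * gB (tauB i)) := by
  induction l with
  | zero => simp
  | succ m ih =>
    rw [key2, ih, comm_y_x_self i, expand2 u ((Real.sqrt 2 : ℂ) * v) (xB i) (xB i ^ m),
      tau_rec i m]
    congr 3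
    rw [Finset.mul_sum, Finset.sum_mul, ← Finset.sum_add_distrib]
    apply Finset.sum_congr rfl
    intro k hk
    have hki : k ≠ i := Finset.ne_of_mem_erase hk
    have hε : ((-1 : ℂ)) ^ m * ((-1 : ℂ)) ^ m = 1 := by rw [← mul_pow]; norm_num
    have hCxk : (cB k * cB i : HCB n u v) * xB k = (-1 : ℂ) • (xB k * (cB k * cB i)) := by
      rw [Cx_first hki]; exact (nos (A := HCB n u v) _).symm
    rw [step2 (xB i) (xB i ^ m) (xB k ^ m) (cB k * cB i) (gB (sB k i)) (gB (sbarB k i)) _ _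
        ((-1 : ℂ) ^ m) hε (hom_pow (sB_x_right hki) m) (shom_pow (sbarB_x_right hki) m)
        (shom_pow hCxk m),
      Psucc' (xB i) (xB k) m, Qsucc' (xB i) (xB k) m]

end KW6
/-- **Commutators with powers of `x` in type `B_n`** (Khongsap-Wang, Lemma 4.1).
In `H^c_{B_n}(u,v)`, for `l ≥ 0` and `i ≠ j`, with the divided-difference sums
`P = Σ_{a<l} x_j^a x_i^{l-1-a}`, `Q = Σ_{a<l} (-1)^{l-1-a} x_j^a x_i^{l-1-a}`:
`[y_i,x_j^l] = u(P + Q c_i c_j)s_{ij} - u(Q - P c_i c_j)s̄_{ij}`, and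
`[y_i,x_i^l] = -u Σ_{k≠i}((P_k + Q_k c_k c_i)s_{ki} + (Q_k - P_k c_k c_i)s̄_{ki}) - √2 v R τ_i`
where `R = x_i^{l-1}` for `l` odd and `R = 0` for `l` even. -/
theorem daHCaB_comm_y_xpow (n : ℕ) (hn : 2 ≤ n) (u v : ℂ) (l : ℕ) (i j : Fin n)
    (hij : i ≠ j) (P Q : HCB n u v) (Pk Qk : Fin n → HCB n u v)
    (hP : P = ∑ a ∈ Finset.range l, xB j ^ a * xB i ^ (l - 1 - a))
    (hQ : Q = ∑ a ∈ Finset.range l, ((-1 : ℂ)) ^ (l - 1 - a) • (xB j ^ a * xB i ^ (l - 1 - a)))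
    (hPk : ∀ k, Pk k = ∑ a ∈ Finset.range l, xB i ^ a * xB k ^ (l - 1 - a))
    (hQk : ∀ k, Qk k
      = ∑ a ∈ Finset.range l, ((-1 : ℂ)) ^ (l - 1 - a) • (xB i ^ a * xB k ^ (l - 1 - a))) :
    ((yB i : HCB n u v) * xB j ^ l - xB j ^ l * yB i
      = u • ((P + Q * (cB i * cB j)) * gB (sB i j))
        - u • ((Q - P * (cB i * cB j)) * gB (sbarB i j))) ∧
    ((yB i : HCB n u v) * xB i ^ l - xB i ^ l * yB i
      = -(u • ∑ k ∈ Finset.univ.erase i,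
            ((Pk k + Qk k * (cB k * cB i)) * gB (sB k i)
              + (Qk k - Pk k * (cB k * cB i)) * gB (sbarB k i)))
        - ((Real.sqrt 2 : ℂ) * v) • ((if Odd l then xB i ^ (l - 1) else 0) * gB (tauB i))) := by
  subst hP hQ
  refine ⟨KW6.part1 hij l, ?_⟩
  simp only [hPk, hQk]
  exact KW6.part2 i l

end
end

section
/- In the rational double affine Hecke–Clifford algebra H^c_{B_n}(u,v), for every integer l ≥ 0 and all i ≠ j, setting P = Σ_{a=0}^{l−1} y_j^a y_i^{l−1−a} and Q = Σ_{a=0}^{l−1} (−1)^{l−1−a} y_j^a y_i^{l−1−a}: [y_j^l, x_i] = u·P·(1 + c_j c_i)·s_{ij} − u·Q·(1 − c_j c_i)·s̄_{ij}; and setting, for each k ≠ i, P_k = Σ_{a=0}^{l−1} y_i^a y_k^{l−1−a} and Q_k = Σ_{a=0}^{l−1} (−1)^{l−1−a} y_i^a y_k^{l−1−a}: [y_i^l, x_i] = −u·Σ_{k≠i} P_k·(1 + c_k c_i)·s_{ki} − u·Σ_{k≠i} Q_k·(1 − c_k c_i)·s̄_{ki} − √2·v·R·τ_i, where R = y_i^{l−1}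 if l is odd and R = 0 if l is even. -/
noncomputable section

variable {n : ℕ} {G : Type} [Group G] {act : G → Fin n → ℂ × Fin n}
  {R : Fin n → Fin n → HF n G}

section Aux

variable {n : ℕ} {u v : ℂ}

private lemma relQ {a b : HF n (WB n)} (h : HRel n (WB n) actB (RB n u v) a b) :
    RingQuot.mkAlgHom ℂ (HRel n (WB n) actB (RB n u v)) a
      = RingQuot.mkAlgHom ℂ (HRel n (WB n) actB (RB n u v)) b :=
  RingQuot.mkAlgHom_rel ℂ h

lemma yB_comm (i j : Fin n) : (yB i : HCB n u v) * yB j = yB j * yB i := by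
  simpa only [yB, dY, map_mul] using relQ (u := u) (v := v) (HRel.yy i j)

lemma yB_cB (i j : Fin n) : (yB i : HCB n u v) * cB j = cB j * yB i := by
  simpa only [yB, cB, dY, dC, map_mul] using relQ (u := u) (v := v) (HRel.yc i j)

lemma gB_yB (w : WB n) (m : Fin n) :
    (gB w : HCB n u v) * yB m = (actB w m).1 • (yB (actB w m).2 * gB w) := by
  simpa only [yB, gB, dY, dG, map_mul, map_smul] using relQ (u := u) (v := v) (HRel.gy w m)

lemma yB_xB (j i : Fin n) :
    (yB j : HCB n u v) * xB i
      = xB i * yB j + RingQuot.mkAlgHom ℂ (HRel n (WB n) actB (RB n u v)) (RB n u v j i) := by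
  simpa only [yB, xB, dY, dX, map_mul, map_add] using relQ (u := u) (v := v) (HRel.yx j i)

lemma actB_sB_right (i j : Fin n) : actB (sB i j) j = (1, i) := by
  simp [actB, sB]

lemma actB_sbarB_right {i j : Fin n} (h : i ≠ j) : actB (sbarB i j) j = (-1, i) := by
  simp [actB, sbarB]

lemma actB_tauB (i : Fin n) : actB (tauB i) i = (-1, i) := by
  simp [actB, tauB]

end Aux

section Aux2

variable {n : ℕ} {u v : ℂ}

lemma move_pow {A : Type*} [Ring A] [Algebra ℂ A] {z y y' : A} {ε : ℂ}
    (h : z * y = ε • (y' * z)) (b : ℕ) : z * y ^ b = ε ^ b • (y' ^ b * z) := by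
  induction b with
  | zero => simp
  | succ b ih =>
    calc z * y ^ (b + 1) = (z * y ^ b) * y := by rw [pow_succ, mul_assoc]
      _ = ε ^ b • (y' ^ b * (z * y)) := by rw [ih, smul_mul_assoc, mul_assoc]
      _ = ε ^ b • (y' ^ b * (ε • (y' * z))) := by rw [h]
      _ = ε ^ (b + 1) • (y' ^ (b + 1) * z) := by
          rw [mul_smul_comm, smul_smul, ← mul_assoc, ← pow_succ, ← pow_succ]

lemma comm_pow_s9 {A : Type*} [Ring A] (y x : A) (l : ℕ) :
    y ^ l * x - x * y ^ l
      = ∑ a ∈ Finset.range l, y ^ a * (y * x - x * y) * y ^ (l - 1 - a) := by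
  induction l with
  | zero => simp
  | succ l ih =>
    rw [Finset.sum_range_succ]
    have h1 : ∀ a ∈ Finset.range l,
        y ^ a * (y * x - x * y) * y ^ (l + 1 - 1 - a)
          = (y ^ a * (y * x - x * y) * y ^ (l - 1 - a)) * y := by
      intro a ha
      rw [Finset.mem_range] at ha
      have h2 : l + 1 - 1 - a = (l - 1 - a) + 1 := by omega
      rw [h2, pow_succ, ← mul_assoc]
    rw [Finset.sum_congr rfl h1, ← Finset.sum_mul, ← ih]
    have h0 : l + 1 - 1 - l = 0 := by omega
    rw [h0, pow_zero, mul_one, pow_succ]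
    simp only [mul_sub, sub_mul, mul_assoc]
    abel

lemma cc_yB (p q m : Fin n) :
    (cB p * cB q : HCB n u v) * yB m = yB m * (cB p * cB q) := by
  rw [mul_assoc, ← yB_cB, ← mul_assoc, ← yB_cB, mul_assoc]

end Aux2

section Aux3

variable {n : ℕ} {u v : ℂ}

lemma dg_move {d : HCB n u v} (hd : ∀ m0 : Fin n, d * yB m0 = yB m0 * d)
    {w : WB n} {m m' : Fin n} {ε : ℂ} (hw : actB w m = (ε, m')) (b : ℕ) :
    (d * gB w) * yB m ^ b = ε ^ b • (yB m' ^ b * (d * gB w)) := by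
  apply move_pow
  rw [mul_assoc, gB_yB, hw]
  show d * (ε • (yB m' * gB w)) = _
  rw [mul_smul_comm, ← mul_assoc, hd, mul_assoc]

lemma one_add_cc_yB (p q m : Fin n) :
    ((1 + cB p * cB q : HCB n u v)) * yB m = yB m * (1 + cB p * cB q) := by
  rw [add_mul, one_mul, cc_yB, mul_add, mul_one]

lemma one_sub_cc_yB (p q m : Fin n) :
    ((1 - cB p * cB q : HCB n u v)) * yB m = yB m * (1 - cB p * cB q) := by
  rw [sub_mul, one_mul, cc_yB, mul_sub, mul_one]

lemma Bp_move (p q : Fin n) {w : WB n} {m m' : Fin n} {ε : ℂ}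
    (hw : actB w m = (ε, m')) (b : ℕ) :
    ((1 + cB p * cB q : HCB n u v) * gB w) * yB m ^ b
      = ε ^ b • (yB m' ^ b * ((1 + cB p * cB q) * gB w)) :=
  dg_move (fun m0 => one_add_cc_yB p q m0) hw b

lemma Bm_move (p q : Fin n) {w : WB n} {m m' : Fin n} {ε : ℂ}
    (hw : actB w m = (ε, m')) (b : ℕ) :
    ((1 - cB p * cB q : HCB n u v) * gB w) * yB m ^ b
      = ε ^ b • (yB m' ^ b * ((1 - cB p * cB q) * gB w)) :=
  dg_move (fun m0 => one_sub_cc_yB p q m0) hw b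

lemma gB_yB_pow {w : WB n} {m m' : Fin n} {ε : ℂ} (hw : actB w m = (ε, m')) (b : ℕ) :
    (gB w : HCB n u v) * yB m ^ b = ε ^ b • (yB m' ^ b * gB w) := by
  have := dg_move (d := (1 : HCB n u v)) (fun m0 => by rw [one_mul, mul_one]) hw b
  simpa only [one_mul] using this

lemma comm_yx_ne {i j : Fin n} (hij : i ≠ j) :
    (yB j : HCB n u v) * xB i - xB i * yB j
      = u • ((1 + cB j * cB i) * gB (sB i j)) - u • ((1 - cB j * cB i) * gB (sbarB i j)) := by
  rw [yB_xB, add_sub_cancel_left, RB, if_neg (Ne.symm hij)]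
  simp only [yB, xB, cB, gB, dY, dX, dC, dG, map_smul, map_sub, map_mul, map_add, map_one,
    smul_sub]

lemma comm_yx_eq (i : Fin n) :
    (yB i : HCB n u v) * xB i - xB i * yB i
      = -(u • ∑ k ∈ Finset.univ.erase i,
            ((1 + cB k * cB i) * gB (sB k i) + (1 - cB k * cB i) * gB (sbarB k i)))
        - ((Real.sqrt 2 : ℂ) * v) • gB (tauB i) := by
  rw [yB_xB, add_sub_cancel_left, RB, if_pos rfl]
  simp only [yB, xB, cB, gB, dY, dX, dC, dG, map_smul, map_sub, map_mul, map_add, map_one,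
    map_neg, map_sum]

lemma alt_sum (l : ℕ) :
    (∑ a ∈ Finset.range l, ((-1 : ℂ)) ^ (l - 1 - a)) = if Odd l then 1 else 0 := by
  rw [Finset.sum_range_reflect]
  rw [neg_one_geom_sum]
  by_cases h : Even l
  · simp [h, ← Nat.not_even_iff_odd]
  · simp [h, ← Nat.not_even_iff_odd]

end Aux3

section Aux4

variable {n : ℕ} {u v : ℂ}

lemma hcbNegMul (x y : HCB n u v) : (-x) * y = -(x * y) := neg_mul x y
lemma hcbMulNeg (x y : HCB n u v) : x * (-y) = -(x * y) := mul_neg x y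
lemma hcbSumNeg (s : Finset (Fin n)) (f : Fin n → HCB n u v) :
    (∑ k ∈ s, -(f k)) = -∑ k ∈ s, f k := Finset.sum_neg_distrib f
lemma hcbRangeSumNeg (m : ℕ) (f : ℕ → HCB n u v) :
    (∑ a ∈ Finset.range m, -(f a)) = -∑ a ∈ Finset.range m, f a := Finset.sum_neg_distrib f
lemma hcbNegSmul (a : ℂ) (x : HCB n u v) : -(a • x) = a • (-x) := (smul_neg a x).symm
lemma hcbZeroMul (x : HCB n u v) : (0 : HCB n u v) * x = 0 := zero_mul x
lemma hcbIfSmul (p : Prop) [Decidable p] (x : HCB n u v) :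
    (if p then (1 : ℂ) else 0) • x = (if p then (1 : HCB n u v) else 0) * x := by
  split
  · rw [one_smul, one_mul]
  · rw [zero_smul, zero_mul]

lemma hcbNegAdd (x y : HCB n u v) : -(x + y) = -x - y := neg_add' x y

end Aux4
/-- **Commutators of powers of `y` with `x` in type `B_n`** (Khongsap-Wang, Lemma 4.5).
In `H^c_{B_n}(u,v)`, for `l ≥ 0` and `i ≠ j`, with
`P = Σ_{a<l} y_j^a y_i^{l-1-a}`, `Q = Σ_{a<l} (-1)^{l-1-a} y_j^a y_i^{l-1-a}`:
`[y_j^l,x_i] = u P (1+c_j c_i)s_{ij} - u Q (1-c_j c_i)s̄_{ij}`, and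
`[y_i^l,x_i] = -u Σ_{k≠i} P_k (1+c_k c_i)s_{ki} - u Σ_{k≠i} Q_k (1-c_k c_i)s̄_{ki} - √2 v R τ_i`
where `R = y_i^{l-1}` for `l` odd and `R = 0` for `l` even. -/
theorem daHCaB_comm_ypow_x (n : ℕ) (hn : 2 ≤ n) (u v : ℂ) (l : ℕ) (i j : Fin n)
    (hij : i ≠ j) (P Q : HCB n u v) (Pk Qk : Fin n → HCB n u v)
    (hP : P = ∑ a ∈ Finset.range l, yB j ^ a * yB i ^ (l - 1 - a))
    (hQ : Q = ∑ a ∈ Finset.range l, ((-1 : ℂ)) ^ (l - 1 - a) • (yB j ^ a * yB i ^ (l - 1 - a)))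
    (hPk : ∀ k, Pk k = ∑ a ∈ Finset.range l, yB i ^ a * yB k ^ (l - 1 - a))
    (hQk : ∀ k, Qk k
      = ∑ a ∈ Finset.range l, ((-1 : ℂ)) ^ (l - 1 - a) • (yB i ^ a * yB k ^ (l - 1 - a))) :
    ((yB j : HCB n u v) ^ l * xB i - xB i * yB j ^ l
      = u • (P * ((1 + cB j * cB i) * gB (sB i j)))
        - u • (Q * ((1 - cB j * cB i) * gB (sbarB i j)))) ∧
    ((yB i : HCB n u v) ^ l * xB i - xB i * yB i ^ l
      = -(u • ∑ k ∈ Finset.univ.erase i, Pk k * ((1 + cB k * cB i) * gB (sB k i)))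
        - u • (∑ k ∈ Finset.univ.erase i, Qk k * ((1 - cB k * cB i) * gB (sbarB k i)))
        - ((Real.sqrt 2 : ℂ) * v) • ((if Odd l then yB i ^ (l - 1) else 0) * gB (tauB i))) := by
  constructor
  · -- part 1
    have key := comm_pow_s9 (yB j : HCB n u v) (xB i) l
    rw [comm_yx_ne hij] at key
    rw [key, hP, hQ, Finset.sum_mul, Finset.sum_mul, Finset.smul_sum, Finset.smul_sum,
      ← Finset.sum_sub_distrib]
    refine Finset.sum_congr rfl fun a _ => ?_
    rw [mul_assoc, sub_mul, smul_mul_assoc, smul_mul_assoc,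
      Bp_move j i (actB_sB_right i j), Bm_move j i (actB_sbarB_right hij),
      one_pow, one_smul, mul_sub, mul_smul_comm, mul_smul_comm, ← mul_assoc,
      mul_smul_comm, smul_mul_assoc]
    simp only [mul_assoc]
  · -- part 2
    have key := comm_pow_s9 (yB i : HCB n u v) (xB i) l
    rw [comm_yx_eq i] at key
    have step : ∀ a ∈ Finset.range l,
        (yB i ^ a : HCB n u v) * (-(u • ∑ k ∈ Finset.univ.erase i,
              ((1 + cB k * cB i) * gB (sB k i) + (1 - cB k * cB i) * gB (sbarB k i)))
          - ((Real.sqrt 2 : ℂ) * v) • gB (tauB i)) * yB i ^ (l - 1 - a)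
        = -(u • ∑ k ∈ Finset.univ.erase i,
              (yB i ^ a * yB k ^ (l - 1 - a)) * ((1 + cB k * cB i) * gB (sB k i)))
          - u • ∑ k ∈ Finset.univ.erase i,
              (((-1 : ℂ)) ^ (l - 1 - a) • (yB i ^ a * yB k ^ (l - 1 - a)))
                * ((1 - cB k * cB i) * gB (sbarB k i))
          - ((Real.sqrt 2 : ℂ) * v) •
              (((-1 : ℂ)) ^ (l - 1 - a) • (yB i ^ (l - 1) * gB (tauB i))) := by
      intro a ha
      rw [Finset.mem_range] at ha
      have hb2 : yB i ^ a * (yB i ^ (l - 1 - a) * gB (tauB i))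
          = (yB i ^ (l - 1) * gB (tauB i) : HCB n u v) := by
        rw [← mul_assoc, ← pow_add]
        congr 2
        omega
      have hSk : ∀ k ∈ Finset.univ.erase i,
          ((1 + cB k * cB i) * gB (sB k i) + (1 - cB k * cB i) * gB (sbarB k i) : HCB n u v)
              * yB i ^ (l - 1 - a)
            = yB k ^ (l - 1 - a) * ((1 + cB k * cB i) * gB (sB k i))
              + ((-1 : ℂ)) ^ (l - 1 - a) •
                  (yB k ^ (l - 1 - a) * ((1 - cB k * cB i) * gB (sbarB k i))) := by
        intro k hk
        have hk' : k ≠ i := (Finset.mem_erase.mp hk).1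
        rw [add_mul, Bp_move k i (actB_sB_right k i), Bm_move k i (actB_sbarB_right hk'),
          one_pow, one_smul]
      rw [mul_assoc, sub_mul, hcbNegMul, smul_mul_assoc, smul_mul_assoc, Finset.sum_mul,
        Finset.sum_congr rfl hSk, gB_yB_pow (actB_tauB i)]
      simp only [mul_sub, hcbMulNeg, mul_smul_comm, Finset.mul_sum, mul_add, smul_mul_assoc,
        mul_assoc, hb2]
      rw [Finset.sum_add_distrib, smul_add, hcbNegAdd]
    have e1 : (∑ a ∈ Finset.range l, ∑ k ∈ Finset.univ.erase i,
          (yB i ^ a * yB k ^ (l - 1 - a)) * ((1 + cB k * cB i) * gB (sB k i)))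
        = ∑ k ∈ Finset.univ.erase i, Pk k * ((1 + cB k * cB i) * gB (sB k i)) := by
      rw [Finset.sum_comm]
      exact Finset.sum_congr rfl fun k _ => by rw [← Finset.sum_mul, ← hPk]
    have e2 : (∑ a ∈ Finset.range l, ∑ k ∈ Finset.univ.erase i,
          (((-1 : ℂ)) ^ (l - 1 - a) • (yB i ^ a * yB k ^ (l - 1 - a)))
            * ((1 - cB k * cB i) * gB (sbarB k i)))
        = ∑ k ∈ Finset.univ.erase i, Qk k * ((1 - cB k * cB i) * gB (sbarB k i)) := by
      rw [Finset.sum_comm]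
      exact Finset.sum_congr rfl fun k _ => by rw [← Finset.sum_mul, ← hQk]
    have e3 : ((if Odd l then (1 : ℂ) else 0) • (yB i ^ (l - 1) * gB (tauB i)) : HCB n u v)
        = (if Odd l then yB i ^ (l - 1) else 0) * gB (tauB i) := by
      by_cases hodd : Odd l
      · rw [if_pos hodd, if_pos hodd]; exact one_smul ℂ _
      · rw [if_neg hodd, if_neg hodd]; exact (zero_smul ℂ _).trans (zero_mul _).symm
    rw [key, Finset.sum_congr rfl step, Finset.sum_sub_distrib, Finset.sum_sub_distrib,
      hcbRangeSumNeg, ← Finset.smul_sum, ← Finset.smul_sum, ← Finset.smul_sum,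
      e1, e2, ← Finset.sum_smul, alt_sum, e3]
end
end
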